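/- The F-linear span (inside A) of the n evaluations {(Λ·P − Λ·R)(a_ℓ) : 1 ≤ ℓ ≤ n}, obtained by substituting X = a_ℓ in the polynomial Λ·P − Λ·R ∈ A[X], is equal to the F-linear span of the n coefficients {coeff(Λ·P − Λ·R mod G, X^u) : 0 ≤ u ≤ n−1} of the remainder of Λ·P − Λ·R upon division by the monic polynomial G. (In other words, the bilinear decoding system P(a_ℓ)Λ(a_ℓ) = b_ℓΛ(a_ℓ), ℓ = 1,…,n, and the key-equation system Λ·P ≡ Λ·R mod G are obtained from each other by linear combinations.) -/

import Mathlib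

open Polynomial

noncomputable def Lam (F : Type*) [CommRing F] (t k : ℕ) :
    Polynomial (MvPolynomial (Fin t ⊕ Fin k) F) :=
  X ^ t + ∑ j : Fin t, C (MvPolynomial.X (Sum.inl j)) * X ^ (j : ℕ)

noncomputable def Pp (F : Type*) [CommRing F] (t k : ℕ) :
    Polynomial (MvPolynomial (Fin t ⊕ Fin k) F) :=
  ∑ i : Fin k, C (MvPolynomial.X (Sum.inr i)) * X ^ (i : ℕ)

noncomputable def liftP (F : Type*) [CommRing F] (t k : ℕ) (f : Polynomial F) :
    Polynomial (MvPolynomial (Fin t ⊕ Fin k) F) :=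
  f.map MvPolynomial.C

/-- the span of the `n` evaluations of `Λ·P − Λ·R` at the points `a ℓ`
equals the span of the `n` coefficients of `(Λ·P − Λ·R) mod G`. -/
theorem stmt0 (F : Type*) [Field F] (n t k : ℕ) (hn : 0 < n) (ht : 1 ≤ t) (hk : 1 ≤ k)
    (a b : Fin n → F) (ha : Function.Injective a)
    (G : Polynomial F) (hG : G = ∏ ℓ : Fin n, (X - C (a ℓ)))
    (R : Polynomial F) (hRdeg : R.degree < n) (hR : ∀ ℓ, R.eval (a ℓ) = b ℓ) :
    Submodule.span F
      {x : MvPolynomial (Fin t ⊕ Fin k) F | ∃ ℓ : Fin n,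
        x = (Lam F t k * Pp F t k - Lam F t k * liftP F t k R).eval
              (MvPolynomial.C (a ℓ))} =
    Submodule.span F
      {x : MvPolynomial (Fin t ⊕ Fin k) F | ∃ u : Fin n,
        x = ((Lam F t k * Pp F t k - Lam F t k * liftP F t k R) %ₘ liftP F t k G).coeff u} := by
  set H : Polynomial (MvPolynomial (Fin t ⊕ Fin k) F) :=
    Lam F t k * Pp F t k - Lam F t k * liftP F t k R with hH
  set G' : Polynomial (MvPolynomial (Fin t ⊕ Fin k) F) := liftP F t k G with hG'
  have hGmonic : G.Monic := by
    rw [hG]; exact monic_prod_of_monic _ _ fun ℓ _ => monic_X_sub_C _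
  have hGdeg : G.natDegree = n := by
    rw [hG, natDegree_prod _ _ fun ℓ _ => X_sub_C_ne_zero _]
    simp
  have hG'monic : G'.Monic := hGmonic.map _
  have hG'deg : G'.natDegree = n := by
    rw [hG', liftP, hGmonic.natDegree_map, hGdeg]
  set Q : Polynomial (MvPolynomial (Fin t ⊕ Fin k) F) := H %ₘ G' with hQ
  have hQdeg : Q.natDegree < n := by
    by_cases h0 : Q = 0
    · simpa [h0] using hn
    · rw [natDegree_lt_iff_degree_lt h0]
      have h := degree_modByMonic_lt H hG'monic
      rwa [degree_eq_natDegree hG'monic.ne_zero, hG'deg] at h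
  have hroot : ∀ ℓ, G'.eval (MvPolynomial.C (a ℓ)) = 0 := by
    intro ℓ
    rw [hG', liftP, eval_map, eval₂_at_apply]
    have : G.eval (a ℓ) = 0 := by
      rw [hG, eval_prod]
      exact Finset.prod_eq_zero (Finset.mem_univ ℓ) (by simp)
    simp [this]
  have heval : ∀ ℓ, H.eval (MvPolynomial.C (a ℓ)) = Q.eval (MvPolynomial.C (a ℓ)) := by
    intro ℓ
    conv_lhs => rw [← modByMonic_add_div H G']
    simp [hroot ℓ, ← hQ]
  have hevalsum : ∀ ℓ, H.eval (MvPolynomial.C (a ℓ))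
      = ∑ w : Fin n, (a ℓ ^ (w : ℕ)) • Q.coeff w := by
    intro ℓ
    rw [heval ℓ, eval_eq_sum_range' hQdeg,
      ← Fin.sum_univ_eq_sum_range (fun w => Q.coeff w * (MvPolynomial.C (a ℓ)) ^ w)]
    refine Finset.sum_congr rfl fun w _ => ?_
    rw [MvPolynomial.smul_eq_C_mul, map_pow, mul_comm]
  have hVdet : IsUnit (Matrix.vandermonde a).det := by
    rw [isUnit_iff_ne_zero, Matrix.det_vandermonde_ne_zero_iff]
    exact ha
  have hcoeff : ∀ u : Fin n, Q.coeff u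
      = ∑ ℓ : Fin n, ((Matrix.vandermonde a)⁻¹ u ℓ) • H.eval (MvPolynomial.C (a ℓ)) := by
    intro u
    have key : (∑ ℓ : Fin n, ((Matrix.vandermonde a)⁻¹ u ℓ) • H.eval (MvPolynomial.C (a ℓ)))
        = ∑ w : Fin n, ((Matrix.vandermonde a)⁻¹ * Matrix.vandermonde a) u w • Q.coeff w := by
      simp_rw [hevalsum, Finset.smul_sum, smul_smul, Matrix.mul_apply, Finset.sum_smul,
        Matrix.vandermonde]
      rw [Finset.sum_comm]
      simp [Matrix.of_apply]
    rw [key, Matrix.nonsing_inv_mul _ hVdet]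
    simp [Matrix.one_apply]
  apply le_antisymm <;> rw [Submodule.span_le] <;> rintro x ⟨i, rfl⟩
  · rw [hevalsum i]
    exact Submodule.sum_mem _ fun w _ =>
      Submodule.smul_mem _ _ (Submodule.subset_span ⟨w, rfl⟩)
  · rw [hcoeff i]
    exact Submodule.sum_mem _ fun ℓ _ =>
      Submodule.smul_mem _ _ (Submodule.subset_span ⟨ℓ, rfl⟩)
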